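/- For every k ≥ 1, any finite set of at least R(k) points in general position in the plane contains k points in convex position for some function R (Erdős–Szekeres theorem). -/
import Mathlib

open Finset

noncomputable def Dd (p q r : ℝ × ℝ) : ℝ :=
  (q.1 - p.1) * (r.2 - p.2) - (q.2 - p.2) * (r.1 - p.1)

lemma Dd_swap12 (a b c : ℝ × ℝ) : Dd b a c = -Dd a b c := by simp only [Dd]; ring
lemma Dd_swap23 (a b c : ℝ × ℝ) : Dd a c b = -Dd a b c := by simp only [Dd]; ring
lemma Dd_self12 (a c : ℝ × ℝ) : Dd a a c = 0 := by simp only [Dd]; ring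
lemma Dd_self13 (a b : ℝ × ℝ) : Dd a b a = 0 := by simp only [Dd]; ring
lemma Dd_self23 (a b : ℝ × ℝ) : Dd a b b = 0 := by simp only [Dd]; ring

lemma combo_coords (α β γ : ℝ) (a b c : ℝ × ℝ) :
    (α • a + β • b + γ • c).1 = α * a.1 + β * b.1 + γ * c.1 ∧
    (α • a + β • b + γ • c).2 = α * a.2 + β * b.2 + γ * c.2 := by
  simp [Prod.smul_def]

lemma Dd_aff1 (α β γ : ℝ) (h : α + β + γ = 1) (a b c q r : ℝ × ℝ) :
    Dd (α • a + β • b + γ • c) q r = α * Dd a q r + β * Dd b q r + γ * Dd c q r := by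
  obtain ⟨h1, h2⟩ := combo_coords α β γ a b c
  simp only [Dd, h1, h2]
  linear_combination (q.2 * r.1 - q.1 * r.2) * h

lemma Dd_aff2 (α β γ : ℝ) (h : α + β + γ = 1) (a b c q r : ℝ × ℝ) :
    Dd q (α • a + β • b + γ • c) r = α * Dd q a r + β * Dd q b r + γ * Dd q c r := by
  obtain ⟨h1, h2⟩ := combo_coords α β γ a b c
  simp only [Dd, h1, h2]
  linear_combination (q.1 * r.2 - q.2 * r.1) * h

lemma Dd_aff3 (α β γ : ℝ) (h : α + β + γ = 1) (a b c q r : ℝ × ℝ) :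
    Dd q r (α • a + β • b + γ • c) = α * Dd q r a + β * Dd q r b + γ * Dd q r c := by
  obtain ⟨h1, h2⟩ := combo_coords α β γ a b c
  simp only [Dd, h1, h2]
  linear_combination (q.2 * r.1 - q.1 * r.2) * h

lemma hull_coeff {a b c x : ℝ × ℝ}
    (hx : x ∈ convexHull ℝ ({a, b, c} : Set (ℝ × ℝ))) :
    ∃ α β γ : ℝ, 0 ≤ α ∧ 0 ≤ β ∧ 0 ≤ γ ∧ α + β + γ = 1 ∧
      x = α • a + β • b + γ • c := by
  rw [show ({a, b, c} : Set (ℝ × ℝ)) = insert a {b, c} from rfl,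
    convexHull_insert ⟨b, by simp⟩] at hx
  rw [mem_convexJoin] at hx
  obtain ⟨a', ha', y, hy, hxy⟩ := hx
  rw [Set.mem_singleton_iff] at ha'
  subst ha'
  rw [convexHull_pair] at hy
  obtain ⟨p, q, hp, hq, hpq, rfl⟩ := hy
  obtain ⟨u, v, hu, hv, huv, rfl⟩ := hxy
  refine ⟨u, v * p, v * q, hu, mul_nonneg hv hp, mul_nonneg hv hq, by nlinarith, ?_⟩
  simp only [smul_add, smul_smul]
  module

lemma notmem (p1 p2 p3 p4 : ℝ × ℝ)
    (h12 : 0 < Dd p1 p2 p3 * Dd p1 p2 p4)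
    (h13 : 0 < Dd p1 p2 p3 * Dd p1 p3 p4)
    (h14 : 0 < Dd p1 p2 p3 * Dd p2 p3 p4) :
    p1 ∉ convexHull ℝ ({p2, p3, p4} : Set (ℝ × ℝ)) ∧
    p2 ∉ convexHull ℝ ({p1, p3, p4} : Set (ℝ × ℝ)) ∧
    p3 ∉ convexHull ℝ ({p1, p2, p4} : Set (ℝ × ℝ)) ∧
    p4 ∉ convexHull ℝ ({p1, p2, p3} : Set (ℝ × ℝ)) := by
  set S1 := Dd p1 p2 p3 with hS1
  set S2 := Dd p1 p2 p4 with hS2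
  set S3 := Dd p1 p3 p4 with hS3
  set S4 := Dd p2 p3 p4 with hS4
  have hS1ne : S1 ≠ 0 := by
    intro h; rw [h] at h12; simp at h12
  have hS1sq : 0 < S1 * S1 := mul_self_pos.2 hS1ne
  have h24 : 0 < S2 * S4 := by nlinarith [mul_pos h12 h14]
  refine ⟨?_, ?_, ?_, ?_⟩
  · intro hx
    obtain ⟨α, β, γ, hα, hβ, hγ, hsum, hc⟩ := hull_coeff hx
    have e : Dd p2 p1 p4 = β * S4 := by
      rw [hc, Dd_aff2 α β γ hsum, Dd_self12, Dd_self23, hS4]; ring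
    rw [Dd_swap12] at e
    have key : S2 * S4 = -(β * (S4 * S4)) := by
      rw [hS2, hS4]; linear_combination (-(Dd p2 p3 p4)) * e
    nlinarith [mul_nonneg hβ (mul_self_nonneg S4)]
  · intro hx
    obtain ⟨α, β, γ, hα, hβ, hγ, hsum, hc⟩ := hull_coeff hx
    have e : Dd p1 p3 p2 = γ * S3 := by
      rw [hc, Dd_aff3 α β γ hsum, Dd_self13, Dd_self23, hS3]; ring
    rw [Dd_swap23] at e
    have key : S1 * S3 = -(γ * (S3 * S3)) := by
      rw [hS1, hS3]; linear_combination (-(Dd p1 p3 p4)) * e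
    nlinarith [mul_nonneg hγ (mul_self_nonneg S3)]
  · intro hx
    obtain ⟨α, β, γ, hα, hβ, hγ, hsum, hc⟩ := hull_coeff hx
    have e : Dd p3 p2 p4 = α * S2 := by
      rw [hc, Dd_aff1 α β γ hsum, Dd_self12, Dd_self13, hS2]; ring
    rw [Dd_swap12] at e
    have key : S2 * S4 = -(α * (S2 * S2)) := by
      rw [hS2, hS4]; linear_combination (-(Dd p1 p2 p4)) * e
    nlinarith [mul_nonneg hα (mul_self_nonneg S2)]
  · intro hx
    obtain ⟨α, β, γ, hα, hβ, hγ, hsum, hc⟩ := hull_coeff hx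
    have e : Dd p1 p4 p3 = β * S1 := by
      rw [hc, Dd_aff2 α β γ hsum, Dd_self12, Dd_self23, hS1]; ring
    rw [Dd_swap23] at e
    have key : S1 * S3 = -(β * (S1 * S1)) := by
      rw [hS1, hS3]; linear_combination (-(Dd p1 p2 p3)) * e
    nlinarith [mul_nonneg hβ (mul_self_nonneg S1)]

lemma collinear_of_Dd_eq_zero {a b c : ℝ × ℝ} (h : Dd a b c = 0) :
    Collinear ℝ ({a, b, c} : Set (ℝ × ℝ)) := by
  by_cases hba : b = a
  · subst hba
    have : ({b, b, c} : Set (ℝ × ℝ)) = {b, c} := by simp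
    rw [this]; exact collinear_pair ℝ b c
  · rw [collinear_iff_of_mem (Set.mem_insert a {b, c})]
    refine ⟨b - a, ?_⟩
    intro p hp
    rcases hp with rfl | rfl | rfl
    · exact ⟨0, by simp⟩
    · exact ⟨1, by simp⟩
    · -- p = c
      have hD : (b.1 - a.1) * (p.2 - a.2) = (b.2 - a.2) * (p.1 - a.1) := by
        simp only [Dd] at h; linarith
      by_cases hx : b.1 - a.1 ≠ 0
      · refine ⟨(p.1 - a.1) / (b.1 - a.1), ?_⟩
        have e1 : (p.1 - a.1) / (b.1 - a.1) * (b.1 - a.1) = p.1 - a.1 := by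
          field_simp
        have e2 : (p.1 - a.1) / (b.1 - a.1) * (b.2 - a.2) = p.2 - a.2 := by
          rw [div_mul_eq_mul_div, div_eq_iff hx]; nlinarith [hD]
        have : ((p.1 - a.1) / (b.1 - a.1)) • (b - a) + a = p := by
          apply Prod.ext <;> simp [Prod.smul_def] <;> [linarith [e1]; linarith [e2]]
        exact this.symm
      · push_neg at hx
        have hy : b.2 - a.2 ≠ 0 := by
          intro hy
          apply hba
          apply Prod.ext <;> [skip; skip] <;> linarith
        refine ⟨(p.2 - a.2) / (b.2 - a.2), ?_⟩
        have e2 : (p.2 - a.2) / (b.2 - a.2) * (b.2 - a.2) = p.2 - a.2 := by field_simp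
        have e1 : p.1 - a.1 = 0 := by
          rw [hx] at hD
          simp only [zero_mul] at hD
          rcases mul_eq_zero.1 hD.symm with h' | h'
          · exact absurd h' hy
          · exact h'
        have : ((p.2 - a.2) / (b.2 - a.2)) • (b - a) + a = p := by
          apply Prod.ext <;> simp [Prod.smul_def, hx] <;> linarith [e1, e2]
        exact this.symm

def NES : ℕ → ℕ
  | 0 => 0
  | m + 1 => 2 ^ (2 * NES m + 1)

lemma pre2 : ∀ (m : ℕ) (c : ℕ → ℕ → Bool) (A : Finset ℕ), 2 ^ m ≤ A.card + 1 →
    ∃ B ⊆ A, B.card = m ∧ ∃ f : ℕ → Bool,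
      ∀ i ∈ B, ∀ j ∈ B, i < j → c i j = f i := by
  intro m
  induction m with
  | zero =>
    intro c A _
    exact ⟨∅, empty_subset _, card_empty, fun _ => true, by simp⟩
  | succ m ih =>
    intro c A h
    have h2m : (1:ℕ) ≤ 2 ^ m := Nat.one_le_two_pow
    have hpow : 2 ^ (m+1) = 2 * 2 ^ m := by ring
    have hA : A.Nonempty := by
      rw [← card_pos]
      omega
    classical
    set v := A.min' hA with hv
    have hvA : v ∈ A := A.min'_mem hA
    have hcard' : (A.erase v).card = A.card - 1 := card_erase_of_mem hvA
    have hsplit : ((A.erase v).filter (fun j => c v j = true)).card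
        + ((A.erase v).filter (fun j => ¬ (c v j = true))).card = (A.erase v).card :=
      card_filter_add_card_filter_not _
    obtain ⟨s, hs⟩ : ∃ s : Bool, 2 ^ m ≤ ((A.erase v).filter (fun j => c v j = s)).card + 1 := by
      by_cases hc : 2 ^ m ≤ ((A.erase v).filter (fun j => c v j = true)).card + 1
      · exact ⟨true, hc⟩
      · refine ⟨false, ?_⟩
        have : ((A.erase v).filter (fun j => ¬ (c v j = true))) =
            ((A.erase v).filter (fun j => c v j = false)) := by
          apply filter_congr
          intro j _
          simp
        rw [← this]
        omega
    obtain ⟨B', hB'sub, hB'card, f, hf⟩ := ih c _ hs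
    have hB'A : ∀ x ∈ B', x ∈ A.erase v := fun x hx => mem_filter.1 (hB'sub hx) |>.1
    have hvlt : ∀ x ∈ B', v < x := by
      intro x hx
      have hxe := hB'A x hx
      have hxA : x ∈ A := mem_of_mem_erase hxe
      have hxv : x ≠ v := ne_of_mem_erase hxe
      exact lt_of_le_of_ne (A.min'_le x hxA) (Ne.symm hxv)
    have hvB' : v ∉ B' := fun hvb => lt_irrefl v (hvlt v hvb)
    refine ⟨insert v B', ?_, ?_, fun i => if i = v then s else f i, ?_⟩
    · intro x hx
      rcases mem_insert.1 hx with rfl | hx'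
      · exact hvA
      · exact mem_of_mem_erase (hB'A x hx')
    · rw [card_insert_of_notMem hvB', hB'card]
    · intro i hi j hj hij
      rcases mem_insert.1 hi with rfl | hi'
      · have hjB' : j ∈ B' := by
          rcases mem_insert.1 hj with rfl | hj'
          · omega
          · exact hj'
        have := mem_filter.1 (hB'sub hjB') |>.2
        simp only [if_pos rfl]
        exact this
      · have hiv : i ≠ v := ne_of_mem_erase (hB'A i hi')
        have hjB' : j ∈ B' := by
          rcases mem_insert.1 hj with rfl | hj'
          · exact absurd hij (by have := hvlt i hi'; omega)
          · exact hj'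
        simp only [if_neg hiv]
        exact hf i hi' j hjB' hij

lemma pre3 : ∀ (m : ℕ) (c : ℕ → ℕ → ℕ → Bool) (A : Finset ℕ), NES m ≤ A.card →
    ∃ B ⊆ A, B.card = m ∧ ∃ f : ℕ → Bool,
      ∀ i ∈ B, ∀ j ∈ B, ∀ l ∈ B, i < j → j < l → c i j l = f i := by
  intro m
  induction m with
  | zero =>
    intro c A _
    exact ⟨∅, empty_subset _, card_empty, fun _ => true, by simp⟩
  | succ m ih =>
    intro c A h
    have hNES : NES (m+1) = 2 ^ (2 * NES m + 1) := rfl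
    have h2m : (2:ℕ) ≤ 2 ^ (2 * NES m + 1) := by
      calc (2:ℕ) = 2 ^ 1 := by norm_num
      _ ≤ 2 ^ (2 * NES m + 1) := Nat.pow_le_pow_right (by norm_num) (by omega)
    have hA : A.Nonempty := by
      rw [← card_pos]; rw [hNES] at h; omega
    classical
    set v := A.min' hA with hv
    have hvA : v ∈ A := A.min'_mem hA
    have hcard' : (A.erase v).card = A.card - 1 := card_erase_of_mem hvA
    -- apply pre2 to the pair coloring (j, l) ↦ c v j l on A.erase v
    obtain ⟨B2, hB2sub, hB2card, f2, hf2⟩ := pre2 (2 * NES m + 1) (fun j l => c v j l)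
      (A.erase v) (by rw [hNES] at h; omega)
    -- pigeonhole on f2 within B2
    have hsplit : (B2.filter (fun j => f2 j = true)).card
        + (B2.filter (fun j => ¬ (f2 j = true))).card = B2.card :=
      card_filter_add_card_filter_not _
    obtain ⟨s, hs⟩ : ∃ s : Bool, NES m ≤ (B2.filter (fun j => f2 j = s)).card := by
      by_cases hc : NES m ≤ (B2.filter (fun j => f2 j = true)).card
      · exact ⟨true, hc⟩
      · refine ⟨false, ?_⟩
        have : (B2.filter (fun j => ¬ (f2 j = true))) =
            (B2.filter (fun j => f2 j = false)) := by
          apply filter_congr; intro j _; simp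
        rw [← this]
        omega
    set B3 := B2.filter (fun j => f2 j = s) with hB3
    obtain ⟨B', hB'sub, hB'card, g, hg⟩ := ih c B3 hs
    have hB'B2 : ∀ x ∈ B', x ∈ B2 := fun x hx => mem_filter.1 (hB'sub hx) |>.1
    have hB'A : ∀ x ∈ B', x ∈ A.erase v := fun x hx => hB2sub (hB'B2 x hx)
    have hvlt : ∀ x ∈ B', v < x := by
      intro x hx
      have hxe := hB'A x hx
      exact lt_of_le_of_ne (A.min'_le x (mem_of_mem_erase hxe)) (Ne.symm (ne_of_mem_erase hxe))
    have hvB' : v ∉ B' := fun hvb => lt_irrefl v (hvlt v hvb)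
    refine ⟨insert v B', ?_, ?_, fun i => if i = v then s else g i, ?_⟩
    · intro x hx
      rcases mem_insert.1 hx with rfl | hx'
      · exact hvA
      · exact mem_of_mem_erase (hB'A x hx')
    · rw [card_insert_of_notMem hvB', hB'card]
    · intro i hi j hj l hl hij hjl
      rcases mem_insert.1 hi with rfl | hi'
      · have hjB' : j ∈ B' := by
          rcases mem_insert.1 hj with rfl | hj'; · omega
          · exact hj'
        have hlB' : l ∈ B' := by
          rcases mem_insert.1 hl with rfl | hl'; · omega
          · exact hl'
        have h1 : c v j l = f2 j := hf2 j (hB'B2 j hjB') l (hB'B2 l hlB') hjl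
        have h2 : f2 j = s := (mem_filter.1 (hB'sub hjB')).2
        simp [h1, h2]
      · have hiv : i ≠ v := ne_of_mem_erase (hB'A i hi')
        have hjB' : j ∈ B' := by
          rcases mem_insert.1 hj with rfl | hj'
          · exact absurd hij (by have := hvlt i hi'; omega)
          · exact hj'
        have hlB' : l ∈ B' := by
          rcases mem_insert.1 hl with rfl | hl'
          · exact absurd hjl (by have := hvlt j hjB'; omega)
          · exact hl'
        simp only [if_neg hiv]
        exact hg i hi' j hjB' l hlB' hij hjl

lemma ramsey3 (k : ℕ) : ∃ R : ℕ, ∀ (c : ℕ → ℕ → ℕ → Bool) (A : Finset ℕ), R ≤ A.card →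
    ∃ B ⊆ A, B.card = k ∧ ∃ s : Bool,
      ∀ i ∈ B, ∀ j ∈ B, ∀ l ∈ B, i < j → j < l → c i j l = s := by
  classical
  refine ⟨NES (2 * k + 1), ?_⟩
  intro c A hcard
  obtain ⟨B0, hB0sub, hB0card, f, hf⟩ := pre3 (2 * k + 1) c A hcard
  have hsplit : (B0.filter (fun j => f j = true)).card
      + (B0.filter (fun j => ¬ (f j = true))).card = B0.card :=
    card_filter_add_card_filter_not _
  obtain ⟨s, hs⟩ : ∃ s : Bool, k ≤ (B0.filter (fun j => f j = s)).card := by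
    by_cases hc : k ≤ (B0.filter (fun j => f j = true)).card
    · exact ⟨true, hc⟩
    · refine ⟨false, ?_⟩
      have : (B0.filter (fun j => ¬ (f j = true))) = (B0.filter (fun j => f j = false)) := by
        apply filter_congr; intro j _; simp
      rw [← this]
      omega
  obtain ⟨B, hBsub, hBcard⟩ := (B0.filter (fun j => f j = s)).exists_subset_card_eq hs
  refine ⟨B, fun x hx => hB0sub (mem_filter.1 (hBsub hx)).1, hBcard, s, ?_⟩
  intro i hi j hj l hl hij hjl
  have hi' := mem_filter.1 (hBsub hi)
  have hj' := mem_filter.1 (hBsub hj)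
  have hl' := mem_filter.1 (hBsub hl)
  rw [hf i hi'.1 j hj'.1 l hl'.1 hij hjl, hi'.2]

lemma same_sign {x y : ℝ} (h : decide (0 < x) = decide (0 < y)) (hx : x ≠ 0) (hy : y ≠ 0) :
    0 < x * y := by
  have hiff : (0 < x) ↔ (0 < y) := decide_eq_decide.1 h
  by_cases h0 : 0 < x
  · exact mul_pos h0 (hiff.1 h0)
  · have hx' : x < 0 := lt_of_le_of_ne (not_lt.1 h0) hx
    have hy' : y < 0 := lt_of_le_of_ne (not_lt.1 (fun hy0 => h0 (hiff.2 hy0))) hy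
    exact mul_pos_of_neg_of_neg hx' hy'

lemma step (P : ℕ → ℝ × ℝ) (s : Bool) (B : Finset ℕ)
    (hmono : ∀ i ∈ B, ∀ j ∈ B, ∀ l ∈ B, i < j → j < l →
      decide (0 < Dd (P i) (P j) (P l)) = s)
    (hnz : ∀ i ∈ B, ∀ j ∈ B, ∀ l ∈ B, i < j → j < l → Dd (P i) (P j) (P l) ≠ 0)
    {i j l m : ℕ} (hi : i ∈ B) (hj : j ∈ B) (hl : l ∈ B) (hm : m ∈ B)
    (hij : i < j) (hjl : j < l) (hmi : m ≠ i) (hmj : m ≠ j) (hml : m ≠ l)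
    (hx : P m ∈ convexHull ℝ ({P i, P j, P l} : Set (ℝ × ℝ))) : False := by
  have sgn : ∀ a ∈ B, ∀ b ∈ B, ∀ c ∈ B, ∀ d ∈ B, ∀ e ∈ B, ∀ f ∈ B,
      a < b → b < c → d < e → e < f →
      0 < Dd (P a) (P b) (P c) * Dd (P d) (P e) (P f) := by
    intro a ha b hb c hc d hd e he f hf hab hbc hde hef
    exact same_sign ((hmono a ha b hb c hc hab hbc).trans
      (hmono d hd e he f hf hde hef).symm)
      (hnz a ha b hb c hc hab hbc) (hnz d hd e he f hf hde hef)
  have hcase : m < i ∨ (i < m ∧ m < j) ∨ (j < m ∧ m < l) ∨ l < m := by omega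
  rcases hcase with h1 | ⟨h1, h2⟩ | ⟨h1, h2⟩ | h1
  · exact (notmem (P m) (P i) (P j) (P l)
      (sgn m hm i hi j hj m hm i hi l hl h1 hij h1 (hij.trans hjl))
      (sgn m hm i hi j hj m hm j hj l hl h1 hij (h1.trans hij) hjl)
      (sgn m hm i hi j hj i hi j hj l hl h1 hij hij hjl)).1 hx
  · exact (notmem (P i) (P m) (P j) (P l)
      (sgn i hi m hm j hj i hi m hm l hl h1 h2 h1 (h2.trans hjl))
      (sgn i hi m hm j hj i hi j hj l hl h1 h2 hij hjl)
      (sgn i hi m hm j hj m hm j hj l hl h1 h2 h2 hjl)).2.1 hx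
  · exact (notmem (P i) (P j) (P m) (P l)
      (sgn i hi j hj m hm i hi j hj l hl hij h1 hij hjl)
      (sgn i hi j hj m hm i hi m hm l hl hij h1 (hij.trans h1) h2)
      (sgn i hi j hj m hm j hj m hm l hl hij h1 h1 h2)).2.2.1 hx
  · exact (notmem (P i) (P j) (P l) (P m)
      (sgn i hi j hj l hl i hi j hj m hm hij hjl hij (hjl.trans h1))
      (sgn i hi j hj l hl i hi l hl m hm hij hjl (hij.trans hjl) h1)
      (sgn i hi j hj l hl j hj l hl m hm hij hjl hjl h1)).2.2.2 hx

set_option maxHeartbeats 1000000 in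
/-- Erdős–Szekeres theorem on points in convex position. -/
theorem erdos_szekeres_convex_position :
    ∀ k : ℕ, 1 ≤ k → ∃ R : ℕ, ∀ S : Finset (ℝ × ℝ),
      R ≤ S.card →
      (∀ a ∈ S, ∀ b ∈ S, ∀ c ∈ S, a ≠ b → a ≠ c → b ≠ c →
        ¬ Collinear ℝ ({a, b, c} : Set (ℝ × ℝ))) →
      ∃ T ⊆ S, T.card = k ∧
        ∀ x ∈ T, x ∉ convexHull ℝ (↑(T.erase x) : Set (ℝ × ℝ)) := by
  intro k _
  obtain ⟨R, hR⟩ := ramsey3 k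
  refine ⟨R, ?_⟩
  intro S hcard hgen
  classical
  set n := S.card with hn
  set P : ℕ → ℝ × ℝ := fun i => if h : i < n then (S.equivFin.symm ⟨i, h⟩ : ℝ × ℝ) else 0
    with hP
  have hPmem : ∀ i, i < n → P i ∈ S := by
    intro i h
    simp only [hP, dif_pos h]
    exact (S.equivFin.symm ⟨i, h⟩).2
  have hPinj : ∀ i, i < n → ∀ j, j < n → P i = P j → i = j := by
    intro i hi j hj hEq
    simp only [hP, dif_pos hi, dif_pos hj] at hEq
    have h2 := S.equivFin.symm.injective (Subtype.coe_injective hEq)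
    exact congrArg Fin.val h2
  set c : ℕ → ℕ → ℕ → Bool := fun i j l => decide (0 < Dd (P i) (P j) (P l)) with hc
  obtain ⟨B, hBsub, hBcard, s, hmono⟩ := hR c (Finset.range n)
    (by rw [card_range]; exact hcard)
  have hBlt : ∀ i ∈ B, i < n := fun i hi => Finset.mem_range.1 (hBsub hi)
  set T := B.image P with hT
  have hTsub : T ⊆ S := by
    intro x hx
    obtain ⟨i, hi, rfl⟩ := mem_image.1 hx
    exact hPmem i (hBlt i hi)
  have hTcard : T.card = k := by
    rw [hT, card_image_of_injOn, hBcard]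
    exact fun i hi j hj h => hPinj i (hBlt i hi) j (hBlt j hj) h
  refine ⟨T, hTsub, hTcard, ?_⟩
  intro x hxT hxhull
  have hnz : ∀ i ∈ B, ∀ j ∈ B, ∀ l ∈ B, i < j → j < l → Dd (P i) (P j) (P l) ≠ 0 := by
    intro i hi j hj l hl hij hjl hDd
    have hiS : P i ∈ S := hPmem i (hBlt i hi)
    have hjS : P j ∈ S := hPmem j (hBlt j hj)
    have hlS : P l ∈ S := hPmem l (hBlt l hl)
    have hij' : P i ≠ P j := fun h => by
      have := hPinj i (hBlt i hi) j (hBlt j hj) h; omega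
    have hil' : P i ≠ P l := fun h => by
      have := hPinj i (hBlt i hi) l (hBlt l hl) h; omega
    have hjl' : P j ≠ P l := fun h => by
      have := hPinj j (hBlt j hj) l (hBlt l hl) h; omega
    exact hgen _ hiS _ hjS _ hlS hij' hil' hjl' (collinear_of_Dd_eq_zero hDd)
  rw [convexHull_eq_union] at hxhull
  simp only [Set.mem_iUnion] at hxhull
  obtain ⟨t, hts, hai, hxt⟩ := hxhull
  have htcard : t.card ≤ 3 := by
    have h1 := hai.card_le_finrank_succ
    have h2 : Module.finrank ℝ (vectorSpan ℝ (Set.range ((↑) : t → ℝ × ℝ))) ≤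
        Module.finrank ℝ (ℝ × ℝ) := Submodule.finrank_le _
    have h3 : Module.finrank ℝ (ℝ × ℝ) = 2 := by
      simp [Module.finrank_prod]
    rw [Fintype.card_coe] at h1
    omega
  -- helper facts
  have hmemT : ∀ y ∈ t, y ∈ T.erase x := fun y hy => hts hy
  interval_cases h : t.card
  · -- card 0
    rw [card_eq_zero.1 h] at hxt
    simp at hxt
  · -- card 1
    obtain ⟨a, rfl⟩ := card_eq_one.1 h
    simp only [coe_singleton, convexHull_singleton, Set.mem_singleton_iff] at hxt
    have ha : a ∈ T.erase x := hmemT a (mem_singleton_self a)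
    exact (ne_of_mem_erase ha) hxt.symm
  · -- card 2
    obtain ⟨a, b, hab, rfl⟩ := card_eq_two.1 h
    have ha : a ∈ T.erase x := hmemT a (by simp)
    have hb : b ∈ T.erase x := hmemT b (by simp)
    have haS : a ∈ S := hTsub (mem_of_mem_erase ha)
    have hbS : b ∈ S := hTsub (mem_of_mem_erase hb)
    have hxS : x ∈ S := hTsub hxT
    have hax : a ≠ x := ne_of_mem_erase ha
    have hbx : b ≠ x := ne_of_mem_erase hb
    have hcoll : Collinear ℝ ({x, a, b} : Set (ℝ × ℝ)) := by
      apply collinear_insert_of_mem_affineSpan_pair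
      have : (↑({a, b} : Finset (ℝ × ℝ)) : Set (ℝ × ℝ)) = {a, b} := by simp
      rw [this] at hxt
      exact convexHull_subset_affineSpan _ hxt
    have : ({x, a, b} : Set (ℝ × ℝ)) = {a, b, x} := by
      ext z; simp; tauto
    rw [this] at hcoll
    exact hgen a haS b hbS x hxS hab hax hbx hcoll
  · -- card 3
    obtain ⟨a, b, c', hab, hac, hbc, rfl⟩ := card_eq_three.1 h
    have ha : a ∈ T.erase x := hmemT a (by simp)
    have hb : b ∈ T.erase x := hmemT b (by simp)
    have hc : c' ∈ T.erase x := hmemT c' (by simp)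
    have hax : a ≠ x := ne_of_mem_erase ha
    have hbx : b ≠ x := ne_of_mem_erase hb
    have hcx : c' ≠ x := ne_of_mem_erase hc
    obtain ⟨ja, hja, hPa⟩ := mem_image.1 (mem_of_mem_erase ha)
    obtain ⟨jb, hjb, hPb⟩ := mem_image.1 (mem_of_mem_erase hb)
    obtain ⟨jc, hjc, hPc⟩ := mem_image.1 (mem_of_mem_erase hc)
    obtain ⟨jx, hjx, hPx⟩ := mem_image.1 hxT
    have hxab : x ∈ convexHull ℝ ({a, b, c'} : Set (ℝ × ℝ)) := by
      have : (↑({a, b, c'} : Finset (ℝ × ℝ)) : Set (ℝ × ℝ)) = {a, b, c'} := by simp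
      rwa [this] at hxt
    have hjajb : ja ≠ jb := fun hEq => hab (by rw [← hPa, ← hPb, hEq])
    have hjajc : ja ≠ jc := fun hEq => hac (by rw [← hPa, ← hPc, hEq])
    have hjbjc : jb ≠ jc := fun hEq => hbc (by rw [← hPb, ← hPc, hEq])
    have hjxja : jx ≠ ja := fun hEq => hax (by rw [← hPa, ← hPx, hEq])
    have hjxjb : jx ≠ jb := fun hEq => hbx (by rw [← hPb, ← hPx, hEq])
    have hjxjc : jx ≠ jc := fun hEq => hcx (by rw [← hPc, ← hPx, hEq])
    have horder : (ja < jb ∧ jb < jc) ∨ (ja < jc ∧ jc < jb) ∨ (jb < ja ∧ ja < jc) ∨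
        (jb < jc ∧ jc < ja) ∨ (jc < ja ∧ ja < jb) ∨ (jc < jb ∧ jb < ja) := by omega
    rcases horder with ⟨h1, h2⟩ | ⟨h1, h2⟩ | ⟨h1, h2⟩ | ⟨h1, h2⟩ | ⟨h1, h2⟩ | ⟨h1, h2⟩
    · exact step P s B hmono hnz hja hjb hjc hjx h1 h2 hjxja hjxjb hjxjc
        (by rw [hPa, hPb, hPc, hPx]; exact hxab)
    · exact step P s B hmono hnz hja hjc hjb hjx h1 h2 hjxja hjxjc hjxjb
        (by rw [hPa, hPb, hPc, hPx]
            rw [show ({a, c', b} : Set (ℝ × ℝ)) = {a, b, c'} from by ext z; simp; tauto]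
            exact hxab)
    · exact step P s B hmono hnz hjb hja hjc hjx h1 h2 hjxjb hjxja hjxjc
        (by rw [hPa, hPb, hPc, hPx]
            rw [show ({b, a, c'} : Set (ℝ × ℝ)) = {a, b, c'} from by ext z; simp; tauto]
            exact hxab)
    · exact step P s B hmono hnz hjb hjc hja hjx h1 h2 hjxjb hjxjc hjxja
        (by rw [hPa, hPb, hPc, hPx]
            rw [show ({b, c', a} : Set (ℝ × ℝ)) = {a, b, c'} from by ext z; simp; tauto]
            exact hxab)
    · exact step P s B hmono hnz hjc hja hjb hjx h1 h2 hjxjc hjxja hjxjb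
        (by rw [hPa, hPb, hPc, hPx]
            rw [show ({c', a, b} : Set (ℝ × ℝ)) = {a, b, c'} from by ext z; simp; tauto]
            exact hxab)
    · exact step P s B hmono hnz hjc hjb hja hjx h1 h2 hjxjc hjxjb hjxja
        (by rw [hPa, hPb, hPc, hPx]
            rw [show ({c', b, a} : Set (ℝ × ℝ)) = {a, b, c'} from by ext z; simp; tauto]
            exact hxab)
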